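/- Let f be a palindrome in ℝ[z,z⁻¹] and g an antipalindrome in ℝ[z,z⁻¹]. If f and g are equicorrelational, then f = g = 0. -/

import Mathlib

open LaurentPolynomial
open scoped Classical

/-- The length of a Laurent polynomial: 1 plus the difference between the maximal and
minimal exponents occurring with nonzero coefficient; the length of 0 is 0. -/
noncomputable def len {F : Type*} [Field F] (f : LaurentPolynomial F) : ℤ :=
  if h : f = 0 then 0
  else f.coeff.support.max' (Finsupp.support_nonempty_iff.mpr (mt AddMonoidAlgebra.coeff_eq_zero.mp h))
     - f.coeff.support.min' (Finsupp.support_nonempty_iff.mpr (mt AddMonoidAlgebra.coeff_eq_zero.mp h)) + 1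

/-- Substitution `f(z) ↦ f(z^m)`: the image of `f` under the ring homomorphism
sending `z` to `z^m`. -/
noncomputable def subst {F : Type*} [Field F] (m : ℤ) (f : LaurentPolynomial F) :
    LaurentPolynomial F :=
  AddMonoidAlgebra.mapDomainRingHom F (AddMonoidHom.mulLeft m) f

/-- The subring `F[z,z⁻¹]` of `E[z,z⁻¹]` consisting of Laurent polynomials all of whose
coefficients lie in the subfield `F` of `E`. -/
noncomputable def LRing {E : Type*} [Field E] (F : Subfield E) :
    Subring (LaurentPolynomial E) where
  carrier := {f : LaurentPolynomial E | ∀ n : ℤ, f.coeff n ∈ F}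
  zero_mem' := fun n => F.zero_mem
  one_mem' := by
    intro n
    rw [AddMonoidAlgebra.one_def, AddMonoidAlgebra.coeff_single, Finsupp.single_apply]
    split_ifs
    · exact F.one_mem
    · exact F.zero_mem
  add_mem' := by
    intro f g hf hg n
    rw [AddMonoidAlgebra.coeff_add, Finsupp.add_apply]
    exact add_mem (hf n) (hg n)
  neg_mem' := by
    intro f hf n
    rw [AddMonoidAlgebra.coeff_neg, Finsupp.neg_apply]
    exact neg_mem (hf n)
  mul_mem' := by
    intro f g hf hg n
    rw [AddMonoidAlgebra.mul_apply]
    refine sum_mem fun a ha => sum_mem fun b hb => ?_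
    dsimp only
    split_ifs
    · exact mul_mem (hf a) (hg b)
    · exact zero_mem F

/-- The conjugate of `f(z) = Σ f_j z^j`, namely `f̄(z) = Σ conj(f_j) z^{-j}`. -/
noncomputable def lconj (f : LaurentPolynomial ℂ) : LaurentPolynomial ℂ :=
  AddMonoidAlgebra.ofCoeff
    (Finsupp.equivMapDomain (Equiv.neg ℤ) (Finsupp.mapRange (starRingEnd ℂ) (map_zero _) f.coeff))

/-- `f` and `g` are equicorrelational: `f·f̄ = c·g·ḡ` for some positive real `c`. -/
def Equicorrelational (f g : LaurentPolynomial ℂ) : Prop :=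
  ∃ c : ℝ, 0 < c ∧ f * lconj f = C (c : ℂ) * (g * lconj g)

/-- `f` and `g` are trivially equicorrelational: `g` is a `ℂ[z,z⁻¹]`-associate of `f`
or of `f̄`. -/
def TrivEquicorrelational (f g : LaurentPolynomial ℂ) : Prop :=
  Associated g f ∨ Associated g (lconj f)

/-- A generalized palindrome: `f̄` is a `ℂ[z,z⁻¹]`-associate of `f`. -/
def GenPalindrome (f : LaurentPolynomial ℂ) : Prop :=
  Associated (lconj f) f

/-- `g` is an `F[z,z⁻¹]`-associate of `f`: `g = u·f` for some unit `u` of the subring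
`F[z,z⁻¹]` of `ℂ[z,z⁻¹]`. -/
def FAssoc (F : Subfield ℂ) (g f : LaurentPolynomial ℂ) : Prop :=
  ∃ u : (LRing F)ˣ, g = ((u : LRing F) : LaurentPolynomial ℂ) * f

/-- The `F[z,z⁻¹]`-associate class of `f`. -/
def facl (F : Subfield ℂ) (f : LaurentPolynomial ℂ) : Set (LaurentPolynomial ℂ) :=
  {g | FAssoc F g f}

/-- The `F`-trivial equicorrelationality class of `f`: all elements of `F[z,z⁻¹]`
that are trivially equicorrelational to `f`. -/
def fte (F : Subfield ℂ) (f : LaurentPolynomial ℂ) : Set (LaurentPolynomial ℂ) :=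
  {g | g ∈ LRing F ∧ TrivEquicorrelational f g}

/-- A `k`-ary sequence: a Laurent polynomial whose support is a segment of consecutive
integers and whose nonzero coefficients are complex `k`-th roots of unity. -/
def IsKary (k : ℕ) (f : LaurentPolynomial ℂ) : Prop :=
  (∀ i j l : ℤ, i ≤ j → j ≤ l → f.coeff i ≠ 0 → f.coeff l ≠ 0 → f.coeff j ≠ 0) ∧
  ∀ n : ℤ, f.coeff n ≠ 0 → (f.coeff n) ^ k = 1

/-- A binary sequence: a Laurent polynomial whose support is a segment of consecutive
integers and whose nonzero coefficients all lie in `{1, -1}`. -/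
def IsBinary (f : LaurentPolynomial ℂ) : Prop :=
  (∀ i j l : ℤ, i ≤ j → j ≤ l → f.coeff i ≠ 0 → f.coeff l ≠ 0 → f.coeff j ≠ 0) ∧
  ∀ n : ℤ, f.coeff n ≠ 0 → f.coeff n = 1 ∨ f.coeff n = -1


private lemma coeff_mul_top15 (p q : LaurentPolynomial ℂ) {ap aq : ℤ}
    (hp : ∀ a ∈ p.coeff.support, a ≤ ap) (hq : ∀ a ∈ q.coeff.support, a ≤ aq) :
    (p * q).coeff (ap + aq) = p.coeff ap * q.coeff aq := by
  classical
  rw [AddMonoidAlgebra.coeff_mul]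
  simp only [Finsupp.sum]
  rw [Finset.sum_eq_single ap]
  · rw [Finset.sum_eq_single aq]
    · rw [if_pos rfl]
    · intro b hb hne
      exact if_neg fun he => hne (by omega)
    · intro hh
      simp [Finsupp.notMem_support_iff.mp hh]
  · intro b hb hne
    refine Finset.sum_eq_zero fun a ha => if_neg fun he => ?_
    have h1 := hp b hb
    have h2 := hq a ha
    omega
  · intro hh
    refine Finset.sum_eq_zero fun a ha => ?_
    simp [Finsupp.notMem_support_iff.mp hh]

private lemma support_mul_le15 (p q : LaurentPolynomial ℂ) {ap aq : ℤ}
    (hp : ∀ a ∈ p.coeff.support, a ≤ ap) (hq : ∀ a ∈ q.coeff.support, a ≤ aq) :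
    ∀ a ∈ (p * q).coeff.support, a ≤ ap + aq := by
  classical
  intro x hx
  obtain ⟨y, hy, z, hz, rfl⟩ := Finset.mem_add.mp (AddMonoidAlgebra.support_coeff_mul_subset p q hx)
  exact add_le_add (hp y hy) (hq z hz)

private lemma supT15 (j : ℤ) : ∀ a ∈ (T j : LaurentPolynomial ℂ).coeff.support, a ≤ j := by
  intro a ha
  replace ha : a ∈ (Finsupp.single j (1:ℂ)).support := ha
  have := Finsupp.support_single_subset ha
  simp only [Finset.mem_singleton] at this
  omega

theorem stmt15 (f g : LaurentPolynomial ℂ)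
    (hfR : ∀ n : ℤ, (f.coeff n).im = 0) (hgR : ∀ n : ℤ, (g.coeff n).im = 0)
    (hfp : ∃ j : ℤ, lconj f = T j * f)
    (hgp : ∃ k : ℤ, lconj g = -(T k * g))
    (h : Equicorrelational f g) :
    f = 0 ∧ g = 0 := by
  classical
  obtain ⟨j, hj⟩ := hfp
  obtain ⟨k, hk⟩ := hgp
  obtain ⟨c, hc, heq⟩ := h
  rw [hj, hk] at heq
  have hTne : ∀ n : ℤ, (T n : LaurentPolynomial ℂ) ≠ 0 := fun n => (isUnit_T n).ne_zero
  have hCne : (C (c:ℂ) : LaurentPolynomial ℂ) ≠ 0 := by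
    intro h0
    have h1 : (AddMonoidAlgebra.single 0 (c:ℂ) : LaurentPolynomial ℂ) = 0 := by
      rw [single_eq_C_mul_T, T_zero, mul_one, h0]
    rw [AddMonoidAlgebra.single_eq_zero, Complex.ofReal_eq_zero] at h1
    exact hc.ne' h1
  have hf0 : f = 0 := by
    by_contra hf
    have hfs : f.coeff.support.Nonempty := Finsupp.support_nonempty_iff.mpr (mt AddMonoidAlgebra.coeff_eq_zero.mp hf)
    set a := f.coeff.support.max' hfs with ha
    have haf : f.coeff a ≠ 0 := Finsupp.mem_support_iff.mp (f.coeff.support.max'_mem hfs)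
    have hfa : ∀ x ∈ f.coeff.support, x ≤ a := fun x hx => f.coeff.support.le_max' x hx
    have hg : g ≠ 0 := by
      intro hg0
      have hz : f * ((T j : LaurentPolynomial ℂ) * f) = 0 := by rw [heq, hg0]; ring
      rcases mul_eq_zero.mp hz with h1 | h1
      · exact hf h1
      · rcases mul_eq_zero.mp h1 with h2 | h2
        · exact hTne j h2
        · exact hf h2
    have hgs : g.coeff.support.Nonempty := Finsupp.support_nonempty_iff.mpr (mt AddMonoidAlgebra.coeff_eq_zero.mp hg)
    set b := g.coeff.support.max' hgs with hb
    have hbg : g.coeff b ≠ 0 := Finsupp.mem_support_iff.mp (g.coeff.support.max'_mem hgs)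
    have hgb : ∀ x ∈ g.coeff.support, x ≤ b := fun x hx => g.coeff.support.le_max' x hx
    have hCT : (-(C (c:ℂ) * T k) : LaurentPolynomial ℂ) = AddMonoidAlgebra.single k (-(c:ℂ)) := by
      rw [single_eq_C_mul_T, map_neg, neg_mul]
    have hsk : ∀ x ∈ (-(C (c:ℂ) * T k) : LaurentPolynomial ℂ).coeff.support, x ≤ k := by
      rw [hCT, AddMonoidAlgebra.coeff_single]
      intro x hx
      have := Finsupp.support_single_subset hx
      simp only [Finset.mem_singleton] at this
      omega
    have hskc : (-(C (c:ℂ) * T k) : LaurentPolynomial ℂ).coeff k = -(c:ℂ) := by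
      rw [hCT, AddMonoidAlgebra.coeff_single]
      exact Finsupp.single_eq_same
    have E : (T j : LaurentPolynomial ℂ) * (f * f) = (-(C (c:ℂ) * T k)) * (g * g) := by
      linear_combination heq
    have hffs : ∀ x ∈ (f * f).coeff.support, x ≤ a + a := support_mul_le15 f f hfa hfa
    have hggs : ∀ x ∈ (g * g).coeff.support, x ≤ b + b := support_mul_le15 g g hgb hgb
    have lhs1 : ((T j : LaurentPolynomial ℂ) * (f * f)).coeff (j + (a + a)) = f.coeff a * f.coeff a := by
      rw [coeff_mul_top15 (T j) (f * f) (supT15 j) hffs,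
        coeff_mul_top15 f f hfa hfa]
      rw [T, AddMonoidAlgebra.coeff_single, Finsupp.single_eq_same, one_mul]
    have rhs1 : ((-(C (c:ℂ) * T k) : LaurentPolynomial ℂ) * (g * g)).coeff (k + (b + b))
        = (-(c:ℂ)) * (g.coeff b * g.coeff b) := by
      rw [coeff_mul_top15 _ (g * g) hsk hggs, coeff_mul_top15 g g hgb hgb, hskc]
    have hle1 : j + (a + a) ≤ k + (b + b) := by
      have hmem : j + (a + a) ∈ ((-(C (c:ℂ) * T k) : LaurentPolynomial ℂ) * (g * g)).coeff.support := by
        rw [← E, Finsupp.mem_support_iff, lhs1]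
        exact mul_ne_zero haf haf
      exact support_mul_le15 _ _ hsk hggs _ hmem
    have hle2 : k + (b + b) ≤ j + (a + a) := by
      have hmem : k + (b + b) ∈ ((T j : LaurentPolynomial ℂ) * (f * f)).coeff.support := by
        rw [E, Finsupp.mem_support_iff, rhs1]
        refine mul_ne_zero ?_ (mul_ne_zero hbg hbg)
        simp [Complex.ofReal_ne_zero, hc.ne']
      exact support_mul_le15 _ _ (supT15 j) hffs _ hmem
    have hind : j + (a + a) = k + (b + b) := le_antisymm hle1 hle2
    have key : f.coeff a * f.coeff a = (-(c:ℂ)) * (g.coeff b * g.coeff b) := by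
      rw [← lhs1, E, hind, rhs1]
    have hx : (f.coeff a).im = 0 := hfR a
    have hy : (g.coeff b).im = 0 := hgR b
    have hre : (f.coeff a * f.coeff a).re = ((-(c:ℂ)) * (g.coeff b * g.coeff b)).re := congrArg Complex.re key
    simp only [Complex.mul_re, Complex.neg_re, Complex.neg_im, Complex.ofReal_re,
      Complex.ofReal_im, hx, hy, mul_zero, sub_zero, zero_mul, neg_zero, add_zero] at hre
    have hxre : (f.coeff a).re ≠ 0 := fun hh => haf (Complex.ext hh hx)
    nlinarith [mul_self_nonneg (g.coeff b).re, mul_self_pos.mpr hxre]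
  refine ⟨hf0, ?_⟩
  have hz : (C (c:ℂ) : LaurentPolynomial ℂ) * (T k * (g * g)) = 0 := by
    rw [hf0] at heq
    linear_combination heq
  rcases mul_eq_zero.mp hz with h1 | h1
  · exact absurd h1 hCne
  · rcases mul_eq_zero.mp h1 with h2 | h2
    · exact absurd h2 (hTne k)
    · rcases mul_eq_zero.mp h2 with h3 | h3
      · exact h3
      · exact h3
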